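/- arXiv:2512.06273 — 2 statements merged into one kernel-verified Lean document; each statement's English description precedes it below -/
import Mathlib

section
/- The charge statistic on Sₙ is Mahonian: Σ_{w ∈ Sₙ} q^{c(w)} = [n]_q!. -/
open Finset

/-- the word of `w`: `wrd n w k = w(k)` (0-based), `0` out of range. -/
def wrd (n : ℕ) (w : Equiv.Perm (Fin n)) (k : ℕ) : ℕ :=
  if h : k < n then (w ⟨k, h⟩ : ℕ) else 0

/-- descent indicator at position `j` -/
def dInd (n : ℕ) (w : Equiv.Perm (Fin n)) (j : ℕ) : ℕ :=
  if wrd n w (j + 1) < wrd n w j then 1 else 0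

/-- major index -/
def majst (n : ℕ) (w : Equiv.Perm (Fin n)) : ℕ :=
  ∑ j ∈ range (n - 1), (j + 1) * dInd n w j

/-- insertion of the largest value `m` at gap `g` -/
def ins (m : ℕ) (v : Equiv.Perm (Fin m)) (g : Fin (m + 1)) : Equiv.Perm (Fin (m + 1)) :=
  ((finSuccEquiv' g).trans (Equiv.optionCongr v)).trans finSuccEquivLast.symm

lemma ins_apply_self (m : ℕ) (v : Equiv.Perm (Fin m)) (g : Fin (m + 1)) :
    ins m v g g = Fin.last m := by
  simp [ins]

lemma ins_apply_succAbove (m : ℕ) (v : Equiv.Perm (Fin m)) (g : Fin (m + 1)) (j : Fin m) :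
    ins m v g (g.succAbove j) = (v j).castSucc := by
  simp [ins]

lemma wrd_ins_lt (m : ℕ) (v : Equiv.Perm (Fin m)) (g : Fin (m + 1)) (k : ℕ) (hk : k < (g : ℕ)) :
    wrd (m + 1) (ins m v g) k = wrd m v k := by
  have hkm : k < m := by omega
  have h1 : (⟨k, by omega⟩ : Fin (m+1)) = (⟨k, hkm⟩ : Fin m).castSucc := rfl
  have h2 : g.succAbove ⟨k, hkm⟩ = (⟨k, hkm⟩ : Fin m).castSucc :=
    Fin.succAbove_of_castSucc_lt _ _ (by simpa [Fin.lt_iff_val_lt_val] using hk)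
  rw [wrd, wrd, dif_pos (by omega : k < m + 1), dif_pos hkm, h1, ← h2, ins_apply_succAbove]
  simp

lemma wrd_ins_self (m : ℕ) (v : Equiv.Perm (Fin m)) (g : Fin (m + 1)) :
    wrd (m + 1) (ins m v g) (g : ℕ) = m := by
  rw [wrd, dif_pos g.isLt]
  have : (⟨(g : ℕ), g.isLt⟩ : Fin (m+1)) = g := rfl
  rw [this, ins_apply_self]
  simp

lemma wrd_ins_gt (m : ℕ) (v : Equiv.Perm (Fin m)) (g : Fin (m + 1)) (k : ℕ)
    (hk : (g : ℕ) < k) (hk2 : k ≤ m) :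
    wrd (m + 1) (ins m v g) k = wrd m v (k - 1) := by
  have hkm : k - 1 < m := by omega
  have h2 : g.succAbove ⟨k - 1, hkm⟩ = ⟨k, by omega⟩ :=
    by
      rw [Fin.succAbove_of_le_castSucc _ _ (by simp [Fin.le_iff_val_le_val]; omega)]
      ext; simp; omega
  rw [wrd, wrd, dif_pos (by omega : k < m + 1), dif_pos hkm, ← h2, ins_apply_succAbove]
  simp

lemma dInd_le_one (n : ℕ) (w : Equiv.Perm (Fin n)) (j : ℕ) : dInd n w j ≤ 1 := by
  rw [dInd]; split <;> omega

lemma wrd_lt (n : ℕ) (w : Equiv.Perm (Fin n)) (k : ℕ) (hk : k < n) : wrd n w k < n := by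
  rw [wrd, dif_pos hk]; exact (w ⟨k, hk⟩).isLt

lemma dInd_ins_lt (m : ℕ) (v : Equiv.Perm (Fin m)) (g : Fin (m + 1)) (j : ℕ)
    (hj : j + 1 < (g : ℕ)) : dInd (m + 1) (ins m v g) j = dInd m v j := by
  rw [dInd, dInd, wrd_ins_lt m v g _ hj, wrd_ins_lt m v g _ (by omega)]

lemma dInd_ins_eq (m : ℕ) (v : Equiv.Perm (Fin m)) (g : Fin (m + 1)) (j : ℕ)
    (hj : j + 1 = (g : ℕ)) : dInd (m + 1) (ins m v g) j = 0 := by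
  have hg : (g : ℕ) ≤ m := by omega
  have hv := wrd_lt m v j (by omega)
  rw [dInd, hj, wrd_ins_self, wrd_ins_lt m v g j (by omega), if_neg (by omega)]

lemma dInd_ins_self (m : ℕ) (v : Equiv.Perm (Fin m)) (g : Fin (m + 1)) (hg : (g : ℕ) < m) :
    dInd (m + 1) (ins m v g) (g : ℕ) = 1 := by
  have hv := wrd_lt m v (g : ℕ) hg
  rw [dInd, wrd_ins_self, wrd_ins_gt m v g _ (by omega) (by omega), if_pos]
  have : (g : ℕ) + 1 - 1 = (g : ℕ) := by omega
  rw [this]; omega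

lemma dInd_ins_gt (m : ℕ) (v : Equiv.Perm (Fin m)) (g : Fin (m + 1)) (j : ℕ)
    (hj : (g : ℕ) < j) (hj2 : j < m) : dInd (m + 1) (ins m v g) j = dInd m v (j - 1) := by
  have h1 : j + 1 - 1 = (j - 1) + 1 := by omega
  rw [dInd, dInd, wrd_ins_gt m v g _ (by omega) (by omega), wrd_ins_gt m v g _ hj (by omega), h1]

def Dtail (m : ℕ) (v : Equiv.Perm (Fin m)) (g : ℕ) : ℕ :=
  ∑ j ∈ Finset.Ico g (m - 1), dInd m v j

def Ifun (m : ℕ) (v : Equiv.Perm (Fin m)) (g : ℕ) : ℕ :=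
  if g = m then 0
  else if 1 ≤ g ∧ dInd m v (g - 1) = 1 then Dtail m v g + 1
  else Dtail m v g + g + 1

lemma maj_ins (m : ℕ) (v : Equiv.Perm (Fin m)) (g : Fin (m + 1)) :
    majst (m + 1) (ins m v g) = majst m v + Ifun m v (g : ℕ) := by
  have hgm : (g : ℕ) ≤ m := by omega
  rcases eq_or_lt_of_le hgm with hg | hg
  · -- gap at the very end: maj unchanged
    rw [Ifun, if_pos hg, add_zero]
    rcases Nat.eq_zero_or_pos m with hm | hm
    · subst hm; simp [majst]
    · have h1 : m + 1 - 1 = (m - 1) + 1 := by omega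
      rw [majst, h1, Finset.sum_range_succ,
        dInd_ins_eq m v g (m - 1) (by omega), mul_zero, add_zero, majst]
      refine Finset.sum_congr rfl fun j hj => ?_
      simp only [Finset.mem_range] at hj
      rw [dInd_ins_lt m v g j (by omega)]
  · -- gap strictly inside
    have key1 : majst (m + 1) (ins m v g) =
        (∑ j ∈ Finset.Ico 0 (g : ℕ), (j + 1) * dInd (m + 1) (ins m v g) j) +
        (((g : ℕ) + 1) + ∑ j ∈ Finset.Ico ((g : ℕ) + 1) m,
            (j + 1) * dInd (m + 1) (ins m v g) j) := by
      rw [majst, show m + 1 - 1 = m from rfl, Finset.range_eq_Ico,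
        ← Finset.sum_Ico_consecutive _ (Nat.zero_le (g : ℕ)) (le_of_lt hg),
        Finset.sum_eq_sum_Ico_succ_bot hg, dInd_ins_self m v g hg, mul_one]
    have key2 : ∑ j ∈ Finset.Ico ((g : ℕ) + 1) m, (j + 1) * dInd (m + 1) (ins m v g) j =
        (∑ k ∈ Finset.Ico (g : ℕ) (m - 1), (k + 1) * dInd m v k) +
        ∑ k ∈ Finset.Ico (g : ℕ) (m - 1), dInd m v k := by
      rw [← Finset.sum_add_distrib, Finset.sum_Ico_eq_sum_range, Finset.sum_Ico_eq_sum_range,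
        show m - ((g : ℕ) + 1) = m - 1 - (g : ℕ) by omega]
      refine Finset.sum_congr rfl fun i hi => ?_
      simp only [Finset.mem_range] at hi
      rw [dInd_ins_gt m v g ((g : ℕ) + 1 + i) (by omega) (by omega),
        show (g : ℕ) + 1 + i - 1 = (g : ℕ) + i from by omega]
      ring
    have key3 : majst m v = (∑ j ∈ Finset.Ico 0 (g : ℕ), (j + 1) * dInd m v j) +
        ∑ j ∈ Finset.Ico (g : ℕ) (m - 1), (j + 1) * dInd m v j := by
      rw [majst, Finset.range_eq_Ico,
        ← Finset.sum_Ico_consecutive _ (Nat.zero_le (g : ℕ)) (by omega : (g : ℕ) ≤ m - 1)]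
    rcases Nat.eq_zero_or_pos (g : ℕ) with h0 | h0
    · rw [Ifun, if_neg (by omega), if_neg (fun h => by omega), Dtail]
      rw [h0] at key1 key2 key3 ⊢
      simp only [Finset.Ico_self, Finset.sum_empty] at key1 key3
      omega
    · obtain ⟨p, hp⟩ : ∃ p, (g : ℕ) = p + 1 := ⟨(g : ℕ) - 1, by omega⟩
      rw [hp] at key1 key2 key3
      have key4 : ∑ j ∈ Finset.Ico 0 (p + 1), (j + 1) * dInd (m + 1) (ins m v g) j =
          ∑ j ∈ Finset.Ico 0 p, (j + 1) * dInd m v j := by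
        rw [Finset.sum_Ico_succ_top (Nat.zero_le _), dInd_ins_eq m v g p (by omega),
          mul_zero, add_zero]
        refine Finset.sum_congr rfl fun j hj => ?_
        simp only [Finset.mem_Ico] at hj
        rw [dInd_ins_lt m v g j (by omega)]
      have key5 : ∑ j ∈ Finset.Ico 0 (p + 1), (j + 1) * dInd m v j =
          (∑ j ∈ Finset.Ico 0 p, (j + 1) * dInd m v j) + (p + 1) * dInd m v p :=
        Finset.sum_Ico_succ_top (Nat.zero_le _) _
      have hdle := dInd_le_one m v p
      rw [Ifun, if_neg (by omega), hp, Dtail, Nat.add_sub_cancel]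
      by_cases hdd : dInd m v p = 1
      · rw [if_pos ⟨by omega, hdd⟩]
        rw [hdd, mul_one] at key5
        omega
      · rw [if_neg (fun h => hdd h.2)]
        have hdd0 : dInd m v p = 0 := by omega
        rw [hdd0, mul_zero, add_zero] at key5
        omega

lemma Dtail_le (m : ℕ) (v : Equiv.Perm (Fin m)) (g : ℕ) : Dtail m v g ≤ m - 1 - g := by
  simpa [Dtail, Nat.card_Ico, smul_eq_mul] using
    Finset.sum_le_card_nsmul (Finset.Ico g (m - 1)) _ 1 (fun x _ => dInd_le_one m v x)

lemma Ifun_lt_aux (m : ℕ) (v : Equiv.Perm (Fin m)) {g g' : ℕ} (h : g < g') (h2 : g' ≤ m) :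
    Ifun m v g ≠ Ifun m v g' := by
  obtain ⟨q, rfl⟩ : ∃ q, g' = q + 1 := ⟨g' - 1, by omega⟩
  have hq : dInd m v q ≤ 1 := dInd_le_one m v q
  rcases eq_or_lt_of_le h2 with hg' | hg'
  · rw [Ifun, Ifun, if_pos hg', if_neg (show ¬ g = m by omega)]
    split_ifs <;> omega
  · have hsplit : Dtail m v g = (∑ j ∈ Finset.Ico g (q + 1), dInd m v j) + Dtail m v (q + 1) :=
      (Finset.sum_Ico_consecutive _ (by omega) (by omega)).symm
    have htop : ∑ j ∈ Finset.Ico g (q + 1), dInd m v j =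
        (∑ j ∈ Finset.Ico g q, dInd m v j) + dInd m v q :=
      Finset.sum_Ico_succ_top (by omega) _
    have hcard : ∑ j ∈ Finset.Ico g q, dInd m v j ≤ q - g := by
      simpa [Nat.card_Ico, smul_eq_mul] using
        Finset.sum_le_card_nsmul (Finset.Ico g q) _ 1 (fun x _ => dInd_le_one m v x)
    rw [Ifun, Ifun, if_neg (show ¬ g = m by omega), if_neg (show ¬ q + 1 = m by omega)]
    simp only [Nat.add_sub_cancel]
    split_ifs with h1 h2 h2 <;> omega

lemma Ifun_le (m : ℕ) (v : Equiv.Perm (Fin m)) (g : ℕ) (hg : g ≤ m) : Ifun m v g ≤ m := by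
  have hD := Dtail_le m v g
  rw [Ifun]
  split_ifs with h1 h2 <;> omega

lemma Ifun_inj (m : ℕ) (v : Equiv.Perm (Fin m)) {g g' : ℕ} (hg : g ≤ m) (hg' : g' ≤ m)
    (h : Ifun m v g = Ifun m v g') : g = g' := by
  rcases lt_trichotomy g g' with hh | hh | hh
  · exact absurd h (Ifun_lt_aux m v hh hg')
  · exact hh
  · exact absurd h.symm (Ifun_lt_aux m v hh hg)

lemma sum_Ifun (m : ℕ) (v : Equiv.Perm (Fin m)) :
    ∑ g : Fin (m + 1), (Polynomial.X : Polynomial ℤ) ^ Ifun m v (g : ℕ) =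
      ∑ i ∈ Finset.range (m + 1), (Polynomial.X : Polynomial ℤ) ^ i := by
  set J : Fin (m + 1) → Fin (m + 1) := fun g => ⟨Ifun m v (g : ℕ), by
    have := Ifun_le m v (g : ℕ) (by omega); omega⟩ with hJ
  have hinj : Function.Injective J := by
    intro a b hab
    have : Ifun m v (a : ℕ) = Ifun m v (b : ℕ) := congrArg Fin.val hab
    exact Fin.ext (Ifun_inj m v (by omega) (by omega) this)
  have hbij : Function.Bijective J := Finite.injective_iff_bijective.mp hinj
  calc ∑ g : Fin (m + 1), (Polynomial.X : Polynomial ℤ) ^ Ifun m v (g : ℕ)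
      = ∑ g : Fin (m + 1), (Polynomial.X : Polynomial ℤ) ^ ((J g : Fin (m+1)) : ℕ) := rfl
    _ = ∑ t : Fin (m + 1), (Polynomial.X : Polynomial ℤ) ^ (t : ℕ) :=
        hbij.sum_comp (fun t => (Polynomial.X : Polynomial ℤ) ^ (t : ℕ))
    _ = ∑ i ∈ Finset.range (m + 1), (Polynomial.X : Polynomial ℤ) ^ i :=
        Fin.sum_univ_eq_sum_range _ _

lemma ins_bijective (m : ℕ) :
    Function.Bijective (fun p : Equiv.Perm (Fin m) × Fin (m + 1) => ins m p.1 p.2) := by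
  rw [Fintype.bijective_iff_injective_and_card]
  constructor
  · rintro ⟨v, g⟩ ⟨v', g'⟩ h
    simp only at h
    have hg : g = g' := by
      apply (ins m v g).injective
      rw [ins_apply_self, h, ins_apply_self]
    subst hg
    have hv : v = v' := by
      apply Equiv.ext
      intro j
      apply Fin.castSucc_injective
      rw [← ins_apply_succAbove m v g j, h, ins_apply_succAbove]
    rw [hv]
  · simp [Fintype.card_perm, Fintype.card_fin, Nat.factorial_succ, Nat.mul_comm]

lemma majst_sum (n : ℕ) :
    ∑ w : Equiv.Perm (Fin n), (Polynomial.X : Polynomial ℤ) ^ majst n w =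
      ∏ k ∈ Finset.range n, ∑ i ∈ Finset.range (k + 1), (Polynomial.X : Polynomial ℤ) ^ i := by
  induction n with
  | zero => simp [majst]
  | succ n ih =>
    rw [Finset.prod_range_succ, ← ih,
      ← (ins_bijective n).sum_comp (fun w => (Polynomial.X : Polynomial ℤ) ^ majst (n + 1) w),
      Fintype.sum_prod_type, Finset.sum_mul]
    refine Finset.sum_congr rfl fun v _ => ?_
    rw [← sum_Ifun n v, Finset.mul_sum]
    refine Finset.sum_congr rfl fun g _ => ?_
    simp only
    rw [maj_ins, pow_add]

/-- `lIdx n w k` is the (0-based) position of the (0-based) value `k` in `w`,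
i.e. `w⁻¹(k+1)` in 1-based notation. -/
def lIdx (n : ℕ) (w : Equiv.Perm (Fin n)) (k : ℕ) : ℕ :=
  if h : k < n then (w.symm ⟨k, h⟩ : ℕ) else 0

/-- The charge labels: `c₁(w) = 0` and for `i ≥ 2`,
`cᵢ(w) = c_{i-1}(w) + 1` if `w⁻¹(i) < w⁻¹(i-1)`, else `cᵢ(w) = c_{i-1}(w)`. -/
def chargeLabel (n : ℕ) (w : Equiv.Perm (Fin n)) : ℕ → ℕ
  | 0 => 0
  | 1 => 0
  | (i + 2) => chargeLabel n w (i + 1) + (if lIdx n w (i + 1) < lIdx n w i then 1 else 0)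

/-- The charge `c(w) = Σ_{i=1}^{n} cᵢ(w)`. -/
def charge (n : ℕ) (w : Equiv.Perm (Fin n)) : ℕ :=
  ∑ i ∈ Finset.Icc 1 n, chargeLabel n w i

lemma chargeLabel_eq (n : ℕ) (w : Equiv.Perm (Fin n)) (i : ℕ) :
    chargeLabel n w (i + 1) = ∑ k ∈ Finset.range i, dInd n w.symm k := by
  induction i with
  | zero => rfl
  | succ i ih =>
    rw [chargeLabel, ih, Finset.sum_range_succ]
    congr 1

lemma triangle (n : ℕ) (f : ℕ → ℕ) :
    ∑ i ∈ Finset.range n, ∑ k ∈ Finset.range i, f k =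
      ∑ k ∈ Finset.range n, (n - 1 - k) * f k := by
  induction n with
  | zero => simp
  | succ n ih =>
    rw [Finset.sum_range_succ, ih]
    have h2 : ∑ k ∈ Finset.range (n + 1), (n + 1 - 1 - k) * f k =
        ∑ k ∈ Finset.range n, ((n - 1 - k) * f k + f k) := by
      rw [Finset.sum_range_succ, show n + 1 - 1 - n = 0 by omega, zero_mul, add_zero]
      refine Finset.sum_congr rfl fun k hk => ?_
      simp only [Finset.mem_range] at hk
      rw [show n + 1 - 1 - k = (n - 1 - k) + 1 by omega, add_mul, one_mul]
    rw [h2, Finset.sum_add_distrib]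

lemma charge_eq_cm (n : ℕ) (w : Equiv.Perm (Fin n)) :
    charge n w = ∑ k ∈ Finset.range (n - 1), (n - 1 - k) * dInd n w.symm k := by
  have h1 : charge n w = ∑ i ∈ Finset.range n, chargeLabel n w (i + 1) := by
    rw [charge]
    refine Finset.sum_nbij' (fun a => a - 1) (fun b => b + 1) ?_ ?_ ?_ ?_ ?_ <;>
      intro a ha <;> simp only [Finset.mem_Icc, Finset.mem_range] at * <;> try omega
    rw [show a - 1 + 1 = a by omega]
  rw [h1]
  simp only [chargeLabel_eq]
  rw [triangle]
  rcases Nat.eq_zero_or_pos n with h0 | h0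
  · subst h0; simp
  · obtain ⟨p, rfl⟩ : ∃ p, n = p + 1 := ⟨n - 1, by omega⟩
    rw [Finset.sum_range_succ, show p + 1 - 1 - p = 0 by omega, zero_mul, add_zero,
      Nat.add_sub_cancel]

/-- conjugation by the reversal -/
def conjRev (n : ℕ) (u : Equiv.Perm (Fin n)) : Equiv.Perm (Fin n) :=
  (Fin.revPerm.trans u).trans Fin.revPerm

lemma conjRev_involutive (n : ℕ) : Function.Involutive (conjRev n) := by
  intro u
  apply Equiv.ext
  intro x
  simp [conjRev]

lemma wrd_conjRev (n : ℕ) (u : Equiv.Perm (Fin n)) (k : ℕ) (hk : k < n) :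
    wrd n (conjRev n u) k = n - 1 - wrd n u (n - 1 - k) := by
  rw [wrd, wrd, dif_pos hk, dif_pos (show n - 1 - k < n by omega)]
  simp only [conjRev, Equiv.trans_apply, Fin.revPerm_apply]
  have h1 : Fin.rev (⟨k, hk⟩ : Fin n) = ⟨n - 1 - k, by omega⟩ := by
    apply Fin.ext
    simp only [Fin.val_rev]
    omega
  rw [h1, Fin.val_rev]
  omega

lemma dInd_conjRev (n : ℕ) (u : Equiv.Perm (Fin n)) (j : ℕ) (hj : j < n - 1) :
    dInd n (conjRev n u) j = dInd n u (n - 2 - j) := by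
  have h1 := wrd_lt n u (n - 1 - j) (by omega)
  have h2 := wrd_lt n u (n - 2 - j) (by omega)
  rw [dInd, dInd, wrd_conjRev n u (j + 1) (by omega), wrd_conjRev n u j (by omega),
    show n - 1 - (j + 1) = n - 2 - j by omega, show n - 2 - j + 1 = n - 1 - j by omega]
  by_cases hlt : wrd n u (n - 1 - j) < wrd n u (n - 2 - j)
  · rw [if_pos (by omega), if_pos hlt]
  · rw [if_neg (by omega), if_neg hlt]

lemma cm_eq_majst (n : ℕ) (u : Equiv.Perm (Fin n)) :
    ∑ k ∈ Finset.range (n - 1), (n - 1 - k) * dInd n u k = majst n (conjRev n u) := by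
  rw [majst]
  refine Finset.sum_nbij' (fun a => n - 2 - a) (fun b => n - 2 - b) ?_ ?_ ?_ ?_ ?_ <;>
    intro a ha <;> simp only [Finset.mem_range] at * <;> try omega
  rw [dInd_conjRev n u (n - 2 - a) (by omega), show n - 2 - (n - 2 - a) = a by omega,
    show n - 2 - a + 1 = n - 1 - a by omega]

/-- Charge is Mahonian: `Σ_{w ∈ Sₙ} q^{c(w)} = [n]_q!`. -/
theorem stmt7 (n : ℕ) :
    ∑ w : Equiv.Perm (Fin n), (Polynomial.X : Polynomial ℤ) ^ charge n w =
      ∏ k ∈ Finset.range n, ∑ i ∈ Finset.range (k + 1), (Polynomial.X : Polynomial ℤ) ^ i := by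
  rw [← majst_sum]
  have hbij : Function.Bijective (fun w : Equiv.Perm (Fin n) => conjRev n w.symm) :=
    (conjRev_involutive n).bijective.comp Equiv.symm_bijective
  calc ∑ w : Equiv.Perm (Fin n), (Polynomial.X : Polynomial ℤ) ^ charge n w
      = ∑ w : Equiv.Perm (Fin n),
          (Polynomial.X : Polynomial ℤ) ^ majst n (conjRev n w.symm) :=
        Finset.sum_congr rfl fun w _ => by rw [charge_eq_cm, cm_eq_majst]
    _ = ∑ v : Equiv.Perm (Fin n), (Polynomial.X : Polynomial ℤ) ^ majst n v :=
        hbij.sum_comp (fun v => (Polynomial.X : Polynomial ℤ) ^ majst n v)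
end

section
/- Let λ = (c, c, ..., c) be a rectangular partition with c ≥ 2 and at least 2 rows, of size n. Then no standard Young tableau of shape λ has depth equal to dep(λ) + 1, where dep is applied to the descent composition; i.e., the coefficient of q^{dep(λ)+1} in the fake degree polynomial f_λ(q) = Σ_{T ∈ ST(λ)} q^{dep(des T)} is zero. -/
/-- A standard Young tableau with `n` boxes, encoded by the positions
`pos 0, …, pos (n-1)` of the entries `1, …, n` (rows and columns 0-indexed,
coordinates `(row, column)`).  The conditions say: the positions are distinct, their
set is a Young diagram (down-closed), and entries increase along rows and columns. -/
def IsSYT (n : ℕ) (pos : Fin n → Fin n × Fin n) : Prop :=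
  Function.Injective pos ∧
  (∀ (i : Fin n) (a b : Fin n), a ≤ (pos i).1 → b ≤ (pos i).2 → ∃ j, pos j = (a, b)) ∧
  (∀ i j : Fin n,
    (((pos i).1 = (pos j).1 ∧ (pos i).2 < (pos j).2) ∨
     ((pos i).2 = (pos j).2 ∧ (pos i).1 < (pos j).1)) → i < j)

instance (n : ℕ) : DecidablePred (IsSYT n) := fun _ => by
  unfold IsSYT; infer_instance

/-- The type of standard Young tableaux with `n` boxes. -/
abbrev SYT (n : ℕ) := {pos : Fin n → Fin n × Fin n // IsSYT n pos}

/-- The length of row `r` of `T`. -/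
def rowLen (n : ℕ) (T : SYT n) (r : Fin n) : ℕ :=
  (Finset.univ.filter fun i => (T.1 i).1 = r).card

/-- The multiset of (nonzero) row lengths of `T`: its shape as a partition. -/
def rowMult (n : ℕ) (T : SYT n) : Multiset ℕ :=
  ((Finset.univ : Finset (Fin n)).val.map (rowLen n T)).filter (fun x => 0 < x)

/-- The descent set of `T` as a subset of `Fin (n-1)`: `i` records the 1-based
descent `i+1`, i.e. entry `i+2` lies in a strictly lower row than entry `i+1`. -/
def desSet (n : ℕ) (T : SYT n) : Finset (Fin (n - 1)) :=
  Finset.univ.filter fun i =>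
    (T.1 ⟨(i : ℕ), by have := i.isLt; omega⟩).1 <
      (T.1 ⟨(i : ℕ) + 1, by have := i.isLt; omega⟩).1

/-- The descent composition of `T`: the composition of `n` whose partial sums are the
elements of the descent set of `T`. -/
def desComp (n : ℕ) (T : SYT n) : Composition n :=
  ((compositionAsSetEquiv n).symm (desSet n T)).toComposition

/-- The depth of a composition: `dep α = Σᵢ (i-1)·αᵢ`. -/
def depC {n : ℕ} (α : Composition n) : ℕ :=
  ∑ i : Fin α.length, (i : ℕ) * α.blocksFun i

/-! ### Auxiliary lemmas -/

lemma initseg {n : ℕ} (S : Finset (Fin n)) (m : ℕ) (hcard : S.card = m)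
    (hdc : ∀ x y : Fin n, x ≤ y → y ∈ S → x ∈ S) (x : Fin n) : x ∈ S ↔ (x : ℕ) < m := by
  have hcimg : (S.image Fin.val).card = m := by
    rw [Finset.card_image_of_injective _ Fin.val_injective, hcard]
  constructor
  · intro hx
    by_contra hlt
    push_neg at hlt
    have hsub : Finset.range ((x : ℕ) + 1) ⊆ S.image Fin.val := by
      intro j hj
      rw [Finset.mem_range] at hj
      have hjn : j < n := lt_of_le_of_lt (Nat.lt_succ_iff.mp hj) x.isLt
      exact Finset.mem_image.mpr ⟨⟨j, hjn⟩, hdc ⟨j, hjn⟩ x (by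
        simpa [Fin.le_def] using Nat.lt_succ_iff.mp hj) hx, rfl⟩
    have := Finset.card_le_card hsub
    rw [Finset.card_range, hcimg] at this
    omega
  · intro hx
    by_contra hxS
    have hsub : S.image Fin.val ⊆ Finset.range (x : ℕ) := by
      intro j hj
      rw [Finset.mem_image] at hj
      obtain ⟨y, hy, rfl⟩ := hj
      rw [Finset.mem_range]
      by_contra hge
      push_neg at hge
      exact hxS (hdc x y (Fin.le_def.mpr hge) hy)
    have := Finset.card_le_card hsub
    rw [Finset.card_range, hcimg] at this
    omega

lemma abel {n : ℕ} (α : Composition n) :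
    depC α = ∑ t ∈ Finset.Ico 1 α.length, (n - α.sizeUpTo t) := by
  classical
  set L := α.length with hL
  set Bb : ℕ → ℕ := fun i => if h : i < L then α.blocksFun ⟨i, h⟩ else 0 with hBb
  have hS : ∀ t, t ≤ L → α.sizeUpTo t = ∑ i ∈ Finset.range t, Bb i := by
    intro t
    induction t with
    | zero => intro _; simp [Composition.sizeUpTo_zero]
    | succ t ih =>
      intro ht
      have ht' : t < L := ht
      rw [Composition.sizeUpTo_succ _ ht', ih (le_of_lt ht'), Finset.sum_range_succ]
      congr 1
      rw [hBb]
      simp only [ht', dif_pos]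
      rfl
  have hsumn : (∑ i ∈ Finset.range L, Bb i) = n := by
    rw [← hS L le_rfl, Composition.sizeUpTo_length]
  have hdiff : ∀ t ∈ Finset.Ico 1 L, n - α.sizeUpTo t = ∑ i ∈ Finset.Ico t L, Bb i := by
    intro t ht
    rw [Finset.mem_Ico] at ht
    have hsplit : (∑ i ∈ Finset.Ico 0 t, Bb i) + (∑ i ∈ Finset.Ico t L, Bb i)
        = ∑ i ∈ Finset.Ico 0 L, Bb i :=
      Finset.sum_Ico_consecutive _ (Nat.zero_le t) (le_of_lt ht.2)
    simp only [← Finset.range_eq_Ico] at hsplit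
    rw [hS t (le_of_lt ht.2)]
    omega
  rw [Finset.sum_congr rfl hdiff]
  have hIcofilter : ∀ t, t ≤ L → Finset.Ico t L = (Finset.range L).filter (fun i => t ≤ i) := by
    intro t _
    ext i
    simp [Finset.mem_Ico, Finset.mem_range, Finset.mem_filter]
    omega
  calc depC α = ∑ i ∈ Finset.range L, (i : ℕ) * Bb i := by
        rw [depC, ← Fin.sum_univ_eq_sum_range (fun i => i * Bb i) L]
        apply Finset.sum_congr rfl
        intro i _
        rw [hBb]
        simp [i.isLt]
    _ = ∑ i ∈ Finset.range L, ∑ t ∈ Finset.Ico 1 L, (if t ≤ i then Bb i else 0) := by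
        apply Finset.sum_congr rfl
        intro i hi
        rw [Finset.mem_range] at hi
        rw [← Finset.sum_filter]
        have : (Finset.Ico 1 L).filter (fun t => t ≤ i) = Finset.Ico 1 (i + 1) := by
          ext t; simp [Finset.mem_Ico, Finset.mem_filter]; omega
        rw [this, Finset.sum_const, Nat.card_Ico, smul_eq_mul, Nat.add_sub_cancel]
    _ = ∑ t ∈ Finset.Ico 1 L, ∑ i ∈ Finset.range L, (if t ≤ i then Bb i else 0) :=
        Finset.sum_comm
    _ = ∑ t ∈ Finset.Ico 1 L, ∑ i ∈ Finset.Ico t L, Bb i := by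
        apply Finset.sum_congr rfl
        intro t ht
        rw [Finset.mem_Ico] at ht
        rw [hIcofilter t (le_of_lt ht.2), Finset.sum_filter]

lemma mem_bdry {n : ℕ} (s : Finset (Fin (n-1))) (j : Fin (n+1)) :
    j ∈ ((compositionAsSetEquiv n).symm s).boundaries ↔
      j = 0 ∨ j = Fin.last n ∨ ∃ i ∈ s, (j : ℕ) = (i : ℕ) + 1 := by
  simp [compositionAsSetEquiv]

lemma depC_symm_eq {n : ℕ} (s : Finset (Fin (n-1))) :
    depC ((compositionAsSetEquiv n).symm s).toComposition = ∑ i ∈ s, (n - 1 - (i : ℕ)) := by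
  classical
  set C := (compositionAsSetEquiv n).symm s with hC
  set α := C.toComposition with hα
  have hLen : α.length = C.length := C.toComposition_length
  set L := α.length with hL
  have hcard : C.boundaries.card = L + 1 := by
    rw [C.card_boundaries_eq_succ_length, hLen]
  have hbd : ∀ j : Fin (n+1), j ∈ C.boundaries ↔ ∃ t ≤ L, α.sizeUpTo t = (j : ℕ) := by
    intro j
    rw [C.mem_boundaries_iff_exists_blocks_sum_take_eq]
    constructor
    · rintro ⟨t, ht, hsum⟩
      exact ⟨t, by omega, hsum⟩
    · rintro ⟨t, ht, hsum⟩
      exact ⟨t, by omega, hsum⟩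
  have hS0 : α.sizeUpTo 0 = 0 := α.sizeUpTo_zero
  have hSL : α.sizeUpTo L = n := α.sizeUpTo_length
  have hmono : ∀ t t', t < t' → t' ≤ L → α.sizeUpTo t < α.sizeUpTo t' := by
    intro t t' htt ht'
    calc α.sizeUpTo t < α.sizeUpTo (t+1) := α.sizeUpTo_strict_mono (by omega)
      _ ≤ α.sizeUpTo t' := α.monotone_sizeUpTo (by omega)
  have hSpos : ∀ t, 1 ≤ t → t ≤ L → 1 ≤ α.sizeUpTo t := by
    intro t h1 h2
    have := hmono 0 t (by omega) h2
    omega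
  have hSlt : ∀ t, t < L → α.sizeUpTo t < n := by
    intro t h
    have := hmono t L h le_rfl
    omega
  rw [abel]
  refine Finset.sum_bij (fun t ht => (⟨α.sizeUpTo t - 1, ?_⟩ : Fin (n-1))) ?_ ?_ ?_ ?_
  · rw [Finset.mem_Ico] at ht
    have h1 := hSpos t ht.1 (le_of_lt ht.2)
    have h2 := hSlt t ht.2
    omega
  · intro t ht
    rw [Finset.mem_Ico] at ht
    have h1 := hSpos t ht.1 (le_of_lt ht.2)
    have h2 := hSlt t ht.2
    have hj : (⟨α.sizeUpTo t, by omega⟩ : Fin (n+1)) ∈ C.boundaries := by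
      rw [hbd]; exact ⟨t, le_of_lt ht.2, rfl⟩
    rw [mem_bdry] at hj
    rcases hj with h0 | hlast | ⟨i, hi, hval⟩
    · exfalso
      have := congrArg Fin.val h0
      simp at this; omega
    · exfalso
      have := congrArg Fin.val hlast
      simp [Fin.val_last] at this; omega
    · simp only at hval
      show (⟨α.sizeUpTo t - 1, _⟩ : Fin (n-1)) ∈ s
      have : (⟨α.sizeUpTo t - 1, by omega⟩ : Fin (n-1)) = i := by
        apply Fin.ext; simp; omega
      exact this ▸ hi
  · intro t1 ht1 t2 ht2 heq
    rw [Finset.mem_Ico] at ht1 ht2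
    have e1 := hSpos t1 ht1.1 (le_of_lt ht1.2)
    have e2 := hSpos t2 ht2.1 (le_of_lt ht2.2)
    have hveq : α.sizeUpTo t1 = α.sizeUpTo t2 := by
      have := congrArg Fin.val heq
      simp at this; omega
    by_contra hne
    rcases Nat.lt_or_ge t1 t2 with h | h
    · have := hmono t1 t2 h (le_of_lt ht2.2); omega
    · have h' : t2 < t1 := by omega
      have := hmono t2 t1 h' (le_of_lt ht1.2); omega
  · intro i hi
    have hin1 : (i : ℕ) < n - 1 := i.isLt
    have hj : (⟨(i : ℕ) + 1, by omega⟩ : Fin (n+1)) ∈ C.boundaries := by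
      rw [mem_bdry]
      exact Or.inr (Or.inr ⟨i, hi, rfl⟩)
    rw [hbd] at hj
    obtain ⟨t, htL, hteq⟩ := hj
    simp only at hteq
    have ht1 : 1 ≤ t := by
      by_contra h
      have : t = 0 := by omega
      rw [this, hS0] at hteq; omega
    have ht2 : t < L := by
      by_contra h
      have : t = L := by omega
      rw [this, hSL] at hteq; omega
    refine ⟨t, Finset.mem_Ico.mpr ⟨ht1, ht2⟩, ?_⟩
    apply Fin.ext
    simp; omega
  · intro t ht
    rw [Finset.mem_Ico] at ht
    have h1 := hSpos t ht.1 (le_of_lt ht.2)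
    have h2 := hSlt t ht.2
    simp; omega

/-! ### Rows and descent counts -/

def rowF (n : ℕ) (T : SYT n) : ℕ → ℕ := fun k =>
  if h : k < n then ((T.1 ⟨k, h⟩).1 : ℕ) else 0

def DF (n : ℕ) (T : SYT n) : ℕ → ℕ := fun k =>
  ((desSet n T).filter fun (i : Fin (n-1)) => (i : ℕ) < k).card

lemma rowF_eq (n : ℕ) (T : SYT n) (k : Fin n) : rowF n T (k : ℕ) = ((T.1 k).1 : ℕ) := by
  rw [rowF, dif_pos k.isLt]

lemma DF_zero (n : ℕ) (T : SYT n) : DF n T 0 = 0 := by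
  simp [DF]

lemma DF_mono (n : ℕ) (T : SYT n) : Monotone (DF n T) := by
  intro k k' h
  apply Finset.card_le_card
  intro i hi
  rw [Finset.mem_filter] at *
  exact ⟨hi.1, by omega⟩

lemma mem_desSet_iff (n : ℕ) (T : SYT n) (k : ℕ) (hk : k < n - 1) :
    (⟨k, hk⟩ : Fin (n-1)) ∈ desSet n T ↔ rowF n T k < rowF n T (k+1) := by
  have hk1 : k < n := by omega
  have hk2 : k + 1 < n := by omega
  rw [desSet, Finset.mem_filter]
  simp only [Finset.mem_univ, true_and]
  rw [rowF, rowF]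
  rw [dif_pos hk1, dif_pos hk2]
  exact Fin.lt_def

lemma DF_succ (n : ℕ) (T : SYT n) (k : ℕ) (hk : k < n - 1) :
    DF n T (k+1) = DF n T k + (if rowF n T k < rowF n T (k+1) then 1 else 0) := by
  classical
  have hsplit : ((desSet n T).filter fun (i : Fin (n-1)) => (i : ℕ) < k + 1)
      = ((desSet n T).filter fun (i : Fin (n-1)) => (i : ℕ) < k)
        ∪ ((desSet n T).filter fun (i : Fin (n-1)) => (i : ℕ) = k) := by
    ext i
    simp only [Finset.mem_filter, Finset.mem_union]
    by_cases h : i ∈ desSet n T <;> simp [h] <;> omega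
  have hdisj : Disjoint ((desSet n T).filter fun (i : Fin (n-1)) => (i : ℕ) < k)
      ((desSet n T).filter fun (i : Fin (n-1)) => (i : ℕ) = k) := by
    rw [Finset.disjoint_filter]
    intro i _ h1 h2
    omega
  rw [DF, hsplit, Finset.card_union_of_disjoint hdisj]
  congr 1
  have heqk : ((desSet n T).filter fun (i : Fin (n-1)) => (i : ℕ) = k)
      = (desSet n T).filter fun i => i = (⟨k, hk⟩ : Fin (n-1)) := by
    apply Finset.filter_congr
    intro i _
    simp [Fin.ext_iff]
  rw [heqk, Finset.filter_eq']
  by_cases h : (⟨k, hk⟩ : Fin (n-1)) ∈ desSet n T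
  · rw [if_pos h, if_pos ((mem_desSet_iff n T k hk).mp h), Finset.card_singleton]
  · rw [if_neg h, if_neg (fun hc => h ((mem_desSet_iff n T k hk).mpr hc)), Finset.card_empty]

lemma des_sum (n : ℕ) (T : SYT n) :
    ∑ i ∈ desSet n T, (n - 1 - (i : ℕ)) = ∑ k ∈ Finset.range n, DF n T k := by
  classical
  have h1 : ∀ i : Fin (n-1), n - 1 - (i : ℕ)
      = ∑ k ∈ Finset.range n, (if (i : ℕ) < k then 1 else 0) := by
    intro i
    rw [← Finset.sum_filter]
    have : (Finset.range n).filter (fun k => (i : ℕ) < k) = Finset.Ioo (i : ℕ) n := by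
      ext k; simp [Finset.mem_Ioo]; omega
    rw [this, Finset.sum_const, Nat.card_Ioo, smul_eq_mul, mul_one]
    have := i.isLt
    omega
  rw [Finset.sum_congr rfl (fun i _ => h1 i), Finset.sum_comm]
  apply Finset.sum_congr rfl
  intro k _
  rw [← Finset.sum_filter, Finset.sum_const, smul_eq_mul, mul_one, DF]

lemma exists_ascent (n : ℕ) (T : SYT n) :
    ∀ k j, j < k → rowF n T j < rowF n T k → ∃ d, j ≤ d ∧ d < k ∧ rowF n T d < rowF n T (d+1) := by
  intro k
  induction k with
  | zero => intro j hj; omega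
  | succ k ih =>
    intro j hj hrow
    by_cases h : rowF n T k < rowF n T (k+1)
    · by_cases hjk : j ≤ k
      · exact ⟨k, hjk, Nat.lt_succ_self k, h⟩
      · omega
    · push_neg at h
      have hjk : j < k := by
        rcases Nat.lt_or_ge j k with h' | h'
        · exact h'
        · exfalso
          have : j = k := by omega
          subst this
          omega
      obtain ⟨d, hd1, hd2, hd3⟩ := ih j hjk (by omega)
      exact ⟨d, hd1, by omega, hd3⟩

lemma row_le_DF (n : ℕ) (T : SYT n) : ∀ k, k < n → rowF n T k ≤ DF n T k := by
  intro k
  induction k using Nat.strong_induction_on with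
  | _ k ih =>
    intro hk
    set K : Fin n := ⟨k, hk⟩ with hK
    by_cases ha : rowF n T k = 0
    · omega
    · have hrowval : rowF n T k = ((T.1 K).1 : ℕ) := rowF_eq n T K
      have hapos : 0 < ((T.1 K).1 : ℕ) := by omega
      have haboveFin : ((((T.1 K).1 : ℕ) - 1) : ℕ) < n := by
        have := (T.1 K).1.isLt; omega
      obtain ⟨j, hj⟩ := T.2.2.1 K ⟨((T.1 K).1 : ℕ) - 1, haboveFin⟩ (T.1 K).2
        (by rw [Fin.le_def]; simp) le_rfl
      have hjrow : ((T.1 j).1 : ℕ) = ((T.1 K).1 : ℕ) - 1 := by rw [hj]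
      have hjcol : (T.1 j).2 = (T.1 K).2 := by rw [hj]
      have hjK : j < K := by
        apply T.2.2.2 j K
        right
        constructor
        · exact hjcol
        · rw [Fin.lt_def]; omega
      have hjlt : (j : ℕ) < k := hjK
      have hIH : rowF n T j ≤ DF n T j := ih j hjlt j.isLt
      have hjrowF : rowF n T (j : ℕ) = ((T.1 K).1 : ℕ) - 1 := by
        rw [rowF_eq n T j]; omega
      obtain ⟨d, hd1, hd2, hd3⟩ := exists_ascent n T k j hjlt (by omega)
      have hdn : d < n - 1 := by omega
      have hstep : DF n T (d+1) = DF n T d + 1 := by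
        rw [DF_succ n T d hdn, if_pos hd3]
      have h1 : DF n T (j : ℕ) ≤ DF n T d := DF_mono n T hd1
      have h2 : DF n T (d+1) ≤ DF n T k := DF_mono n T (by omega)
      omega

/-! ### Shape lemmas -/

lemma rowLen_const {n c r : ℕ} (T : SYT n) (hshape : rowMult n T = Multiset.replicate r c) :
    ∀ a : Fin n, 0 < rowLen n T a → rowLen n T a = c := by
  intro a ha
  have hmem : rowLen n T a ∈ rowMult n T := by
    rw [rowMult, Multiset.mem_filter]
    exact ⟨Multiset.mem_map.mpr ⟨a, Finset.mem_univ a, rfl⟩, ha⟩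
  rw [hshape] at hmem
  exact Multiset.eq_of_mem_replicate hmem

lemma card_nonzero_rows {n c r : ℕ} (T : SYT n)
    (hshape : rowMult n T = Multiset.replicate r c) :
    (Finset.univ.filter fun a : Fin n => 0 < rowLen n T a).card = r := by
  have h1 : Multiset.card (rowMult n T) = r := by rw [hshape, Multiset.card_replicate]
  rw [rowMult] at h1
  rw [Multiset.filter_map, Multiset.card_map] at h1
  rw [← h1]
  rfl

lemma rows_dc {n : ℕ} (T : SYT n) :
    ∀ a a' : Fin n, a ≤ a' → 0 < rowLen n T a' → 0 < rowLen n T a := by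
  intro a a' hle hpos
  rw [rowLen, Finset.card_pos] at hpos
  obtain ⟨i, hi⟩ := hpos
  rw [Finset.mem_filter] at hi
  obtain ⟨j, hj⟩ := T.2.2.1 i a ⟨0, lt_of_le_of_lt (Nat.zero_le _) (T.1 i).2.isLt⟩
    (by rw [hi.2]; exact hle) (by rw [Fin.le_def]; exact Nat.zero_le _)
  rw [rowLen, Finset.card_pos]
  exact ⟨j, Finset.mem_filter.mpr ⟨Finset.mem_univ j, by rw [hj]⟩⟩

lemma rowLen_eq {n c r : ℕ} (T : SYT n) (hshape : rowMult n T = Multiset.replicate r c)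
    (a : Fin n) : rowLen n T a = if (a : ℕ) < r then c else 0 := by
  have hseg := initseg (Finset.univ.filter fun a : Fin n => 0 < rowLen n T a) r
    (card_nonzero_rows T hshape)
    (by
      intro x y hxy hy
      rw [Finset.mem_filter] at *
      exact ⟨Finset.mem_univ x, rows_dc T x y hxy hy.2⟩)
  by_cases h : (a : ℕ) < r
  · rw [if_pos h]
    have : a ∈ Finset.univ.filter fun a : Fin n => 0 < rowLen n T a := (hseg a).mpr h
    rw [Finset.mem_filter] at this
    exact rowLen_const T hshape a this.2
  · rw [if_neg h]
    by_contra hne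
    have : a ∈ Finset.univ.filter fun a : Fin n => 0 < rowLen n T a :=
      Finset.mem_filter.mpr ⟨Finset.mem_univ a, Nat.pos_of_ne_zero hne⟩
    exact h ((hseg a).mp this)

lemma col_seg {n : ℕ} (T : SYT n) (ρ : Fin n) (b : Fin n) :
    (∃ m, T.1 m = (ρ, b)) ↔ (b : ℕ) < rowLen n T ρ := by
  classical
  set Col : Finset (Fin n) :=
    (Finset.univ.filter fun m => (T.1 m).1 = ρ).image fun m => (T.1 m).2 with hCol
  have hcard : Col.card = rowLen n T ρ := by
    rw [hCol, rowLen]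
    apply Finset.card_image_of_injOn
    intro m hm m' hm' heq
    rw [Finset.mem_coe, Finset.mem_filter] at hm hm'
    apply T.2.1
    exact Prod.ext (hm.2.trans hm'.2.symm) heq
  have hdc : ∀ x y : Fin n, x ≤ y → y ∈ Col → x ∈ Col := by
    intro x y hxy hy
    rw [hCol, Finset.mem_image] at hy
    obtain ⟨m, hm, hmy⟩ := hy
    rw [Finset.mem_filter] at hm
    obtain ⟨j, hj⟩ := T.2.2.1 m ρ x (by rw [hm.2]) (by rw [hmy]; exact hxy)
    rw [hCol, Finset.mem_image]
    refine ⟨j, Finset.mem_filter.mpr ⟨Finset.mem_univ j, by rw [hj]⟩, by rw [hj]⟩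
  have hseg := initseg Col (rowLen n T ρ) hcard hdc b
  rw [← hseg]
  constructor
  · rintro ⟨m, hm⟩
    rw [hCol, Finset.mem_image]
    exact ⟨m, Finset.mem_filter.mpr ⟨Finset.mem_univ m, by rw [hm]⟩, by rw [hm]⟩
  · intro hb
    rw [hCol, Finset.mem_image] at hb
    obtain ⟨m, hm, hmb⟩ := hb
    rw [Finset.mem_filter] at hm
    exact ⟨m, Prod.ext hm.2 hmb⟩

lemma row_sum (n c r : ℕ) (T : SYT n) (hrn : r ≤ n)
    (hrowlen : ∀ a : Fin n, rowLen n T a = if (a : ℕ) < r then c else 0) :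
    ∑ k ∈ Finset.range n, rowF n T k = ∑ i ∈ Finset.range r, i * c := by
  classical
  have h0 : ∑ k ∈ Finset.range n, rowF n T k = ∑ k : Fin n, ((T.1 k).1 : ℕ) := by
    rw [← Fin.sum_univ_eq_sum_range (rowF n T) n]
    apply Finset.sum_congr rfl
    intro k _
    rw [rowF, dif_pos k.isLt]
  have h1 : ∀ k : Fin n, ((T.1 k).1 : ℕ)
      = ∑ a : Fin n, (if (T.1 k).1 = a then (a : ℕ) else 0) := by
    intro k
    rw [Finset.sum_ite_eq (Finset.univ) ((T.1 k).1) (fun a : Fin n => (a : ℕ))]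
    simp
  have h2 : ∀ a : Fin n, (∑ k : Fin n, if (T.1 k).1 = a then (a : ℕ) else 0)
      = (a : ℕ) * rowLen n T a := by
    intro a
    rw [← Finset.sum_filter, Finset.sum_const, smul_eq_mul, rowLen, mul_comm]
  calc ∑ k ∈ Finset.range n, rowF n T k
      = ∑ k : Fin n, ∑ a : Fin n, (if (T.1 k).1 = a then (a : ℕ) else 0) := by
        rw [h0]; exact Finset.sum_congr rfl fun k _ => h1 k
    _ = ∑ a : Fin n, (a : ℕ) * rowLen n T a := by
        rw [Finset.sum_comm]; exact Finset.sum_congr rfl fun a _ => h2 a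
    _ = ∑ a : Fin n, (if (a : ℕ) < r then (a : ℕ) * c else 0) := by
        apply Finset.sum_congr rfl
        intro a _
        rw [hrowlen a]
        by_cases h : (a : ℕ) < r
        · rw [if_pos h, if_pos h]
        · rw [if_neg h, if_neg h, Nat.mul_zero]
    _ = ∑ a ∈ Finset.range n, (if a < r then a * c else 0) :=
        Fin.sum_univ_eq_sum_range (fun a => if a < r then a * c else 0) n
    _ = ∑ i ∈ Finset.range r, i * c := by
        rw [← Finset.sum_filter]
        congr 1
        ext a
        simp [Finset.mem_filter, Finset.mem_range]
        omega

/-- For a rectangular partition `λ = (c^r)` with `c, r ≥ 2`, no standard Young tableau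
of shape `λ` has depth `dep(λ) + 1` (where `dep(λ) = Σ_{i<r} i·c`); i.e. the coefficient
of `q^{dep(λ)+1}` in the fake degree polynomial `Σ_T q^{dep(des T)}` vanishes. -/
theorem stmt18 (n c r : ℕ) (hc : 2 ≤ c) (hr : 2 ≤ r) (hn : n = r * c)
    (T : SYT n) (hshape : rowMult n T = Multiset.replicate r c) :
    depC (desComp n T) ≠ (∑ i ∈ Finset.range r, i * c) + 1 := by
  intro hdep
  have hrc : r * 2 ≤ r * c := Nat.mul_le_mul_left r hc
  have hcr : 2 * c ≤ r * c := Nat.mul_le_mul_right c hr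
  have hrn : r < n := by omega
  have hcn : c < n := by omega
  have hn4 : 4 ≤ n := by nlinarith
  -- depth identity
  have hdc : depC (desComp n T) = ∑ k ∈ Finset.range n, DF n T k := by
    rw [desComp, depC_symm_eq, des_sum]
  have hrs := row_sum n c r T (le_of_lt hrn) (fun a => rowLen_eq T hshape a)
  have hsum : ∑ k ∈ Finset.range n, DF n T k = (∑ k ∈ Finset.range n, rowF n T k) + 1 := by
    rw [hrs, ← hdc, hdep]
  have hle : ∀ k, k < n → rowF n T k ≤ DF n T k := row_le_DF n T
  -- extract the unique defect K
  have hE : ∑ k ∈ Finset.range n, (DF n T k - rowF n T k) = 1 := by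
    have hsplit : ∑ k ∈ Finset.range n, (DF n T k - rowF n T k)
        + ∑ k ∈ Finset.range n, rowF n T k = ∑ k ∈ Finset.range n, DF n T k := by
      rw [← Finset.sum_add_distrib]
      apply Finset.sum_congr rfl
      intro k hk
      rw [Finset.mem_range] at hk
      have := hle k hk
      omega
    omega
  have hex : ∃ K ∈ Finset.range n, DF n T K - rowF n T K ≠ 0 := by
    by_contra h
    push_neg at h
    rw [Finset.sum_eq_zero h] at hE
    omega
  obtain ⟨K, hKmem, hKne⟩ := hex
  have hKn : K < n := Finset.mem_range.mp hKmem
  have hsplitK : (DF n T K - rowF n T K)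
      + ∑ k ∈ (Finset.range n).erase K, (DF n T k - rowF n T k)
      = ∑ k ∈ Finset.range n, (DF n T k - rowF n T k) :=
    Finset.add_sum_erase (Finset.range n) (fun k => DF n T k - rowF n T k) hKmem
  have herase0 : ∑ k ∈ (Finset.range n).erase K, (DF n T k - rowF n T k) = 0 := by
    omega
  have hstar : DF n T K = rowF n T K + 1 := by
    have := hle K hKn
    omega
  have hother : ∀ k, k < n → k ≠ K → DF n T k = rowF n T k := by
    intro k hkn hne
    have h0 := Finset.sum_eq_zero_iff.mp herase0 k
      (Finset.mem_erase.mpr ⟨hne, Finset.mem_range.mpr hkn⟩)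
    have := hle k hkn
    omega
  -- K ≠ 0
  have hK0 : K ≠ 0 := by
    intro h
    rw [h, DF_zero] at hstar
    omega
  -- step into K : the previous row is one bigger
  have hstep1 : DF n T K = DF n T (K-1)
      + (if rowF n T (K-1) < rowF n T K then 1 else 0) := by
    have := DF_succ n T (K-1) (by omega)
    have hK1 : K - 1 + 1 = K := by omega
    rwa [hK1] at this
  have hDK1 : DF n T (K-1) = rowF n T (K-1) := hother (K-1) (by omega) (by omega)
  have ha : rowF n T (K-1) = rowF n T K + 1 := by
    split_ifs at hstep1 with h <;> omega
  -- after K : rows at least rowF K + 2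
  have hafter : ∀ k, K + 1 ≤ k → k < n → rowF n T K + 2 ≤ rowF n T k := by
    intro k hk
    induction k, hk using Nat.le_induction with
    | base =>
      intro hkn
      have hstep := DF_succ n T K (by omega)
      have hD1 : DF n T (K+1) = rowF n T (K+1) := hother (K+1) hkn (by omega)
      split_ifs at hstep with h
      · omega
      · push_neg at h
        omega
    | succ k hk ih =>
      intro hkn
      have hklt : k < n := by omega
      have ihk := ih hklt
      have hstep := DF_succ n T k (by omega)
      have hDk : DF n T k = rowF n T k := hother k hklt (by omega)
      have hDk1 : DF n T (k+1) = rowF n T (k+1) := hother (k+1) hkn (by omega)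
      split_ifs at hstep with h <;> omega
  -- set up the two rows
  have hKm1n : K - 1 < n := by omega
  set Km1F : Fin n := ⟨K - 1, hKm1n⟩ with hKm1F
  set KF : Fin n := ⟨K, hKn⟩ with hKF
  set ρa : Fin n := (T.1 Km1F).1 with hρa
  set ρb : Fin n := (T.1 KF).1 with hρb
  have hρaval : (ρa : ℕ) = rowF n T (K-1) := (rowF_eq n T Km1F).symm
  have hρbval : (ρb : ℕ) = rowF n T K := (rowF_eq n T KF).symm
  have hρab : (ρa : ℕ) = (ρb : ℕ) + 1 := by omega
  -- row lengths are c
  have hlen_a : rowLen n T ρa = c := by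
    apply rowLen_const T hshape
    rw [rowLen, Finset.card_pos]
    exact ⟨Km1F, Finset.mem_filter.mpr ⟨Finset.mem_univ _, rfl⟩⟩
  have hlen_b : rowLen n T ρb = c := by
    apply rowLen_const T hshape
    rw [rowLen, Finset.card_pos]
    exact ⟨KF, Finset.mem_filter.mpr ⟨Finset.mem_univ _, rfl⟩⟩
  -- entries in row ρa are all < K ; entries in row ρb other than K are < K
  have hrowa_lt : ∀ m : Fin n, (T.1 m).1 = ρa → (m : ℕ) < K := by
    intro m hm
    have hmrow : rowF n T (m : ℕ) = (ρa : ℕ) := by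
      rw [rowF_eq n T m, hm]
    by_contra hge
    push_neg at hge
    rcases Nat.eq_or_lt_of_le hge with h | h
    · rw [← h] at hmrow
      omega
    · have := hafter (m : ℕ) (by omega) m.isLt
      omega
  have hrowb_lt : ∀ m : Fin n, (T.1 m).1 = ρb → (m : ℕ) ≠ K → (m : ℕ) < K := by
    intro m hm hne
    have hmrow : rowF n T (m : ℕ) = (ρb : ℕ) := by
      rw [rowF_eq n T m, hm]
    by_contra hge
    push_neg at hge
    have : K < (m : ℕ) := by omega
    have := hafter (m : ℕ) (by omega) m.isLt
    omega
  -- the cell (ρa, c-1)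
  have hcm1n : c - 1 < n := by omega
  set cm1 : Fin n := ⟨c - 1, hcm1n⟩ with hcm1
  obtain ⟨mA, hmA⟩ := (col_seg T ρa cm1).mpr (by rw [hlen_a]; simp [hcm1]; omega)
  have hmAK : (mA : ℕ) < K := hrowa_lt mA (by rw [hmA])
  -- K's column
  have hKcol : ((T.1 KF).2 : ℕ) < c := by
    have h := (col_seg T ρb (T.1 KF).2).mp ⟨KF, Prod.ext hρb.symm rfl⟩
    rwa [hlen_b] at h
  -- the cell (ρb, c-1) must be entry K itself
  obtain ⟨m', hm'⟩ := (col_seg T ρb cm1).mpr (by rw [hlen_b]; simp [hcm1]; omega)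
  have hm'K : m' = KF := by
    by_contra hne
    have hm'lt : (m' : ℕ) < K := hrowb_lt m' (by rw [hm']) (fun h => hne (Fin.ext h))
    rcases lt_trichotomy (((T.1 KF).2 : ℕ)) (c - 1) with h | h | h
    · -- K is left of m' in the same row : then K < m'
      have : KF < m' := by
        apply T.2.2.2 KF m'
        left
        constructor
        · rw [hm', ← hρb]
        · rw [hm', Fin.lt_def]
          simpa [hcm1] using h
      rw [Fin.lt_def] at this
      simp only [hKF] at this
      omega
    · -- same cell : contradiction with injectivity
      apply hne
      apply T.2.1
      rw [hm']
      apply Prod.ext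
      · exact hρb.symm
      · apply Fin.ext
        simpa [hcm1] using h.symm
    · omega
  -- final contradiction : the cell (ρa, c-1) is below (ρb, c-1) = K, so K < mA
  have hfinal : KF < mA := by
    apply T.2.2.2 KF mA
    right
    constructor
    · rw [hmA]
      rw [hm'K] at hm'
      rw [hm']
    · rw [hmA]
      show ρb < ρa
      exact Fin.lt_def.mpr (by omega)
  rw [Fin.lt_def] at hfinal
  simp only [hKF] at hfinal
  omega
end
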